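/- (Closed-loop equations of the normal extremals.) Let A, B ∈ su(1,1) and T ∈ su(1,1), and let X : ℝ → M₂(ℂ) be differentiable with X(t) invertible for all t, satisfying the closed-loop equation X′(t) = (A + u_B(t)·B)·X(t), where u_B(t) := −2·Tr(T · X(t)⁻¹ · B · X(t)). Define u_A(t) := −2·Tr(T · X(t)⁻¹ · A · X(t)) and u_C(t) := −2·Tr(T · X(t)⁻¹ · (A·B − B·A) · X(t)). Then for all t: u_A′(t) = u_B(t)·u_C(t); u_B′(t) = −u_C(t); and u_C′(t) = α·u_A(t) − β·u_B(t) + γ·u_A(t)·u_B(t) − α·u_B(t)², where α = 2·Tr(A·B), β = 2·Tr(A·A), γ = 2·Tr(B·B). -/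

import Mathlib

open Matrix

/-- The metric matrix η = diag(1, -1). -/
def eta : Matrix (Fin 2) (Fin 2) ℂ := !![1, 0; 0, -1]

/-- Membership in the Lie algebra su(1,1): trace zero and Mᴴη + ηM = 0. -/
def su11 (M : Matrix (Fin 2) (Fin 2) ℂ) : Prop :=
  M.trace = 0 ∧ Mᴴ * eta + eta * M = 0

lemma keyA (A B : Matrix (Fin 2) (Fin 2) ℂ) (hA : A.trace = 0) (hB : B.trace = 0) :
    (A*B-B*A)*A - A*(A*B-B*A) = (2*(A*B).trace) • A - (2*(A*A).trace) • B := by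
  have ha : A 1 1 = -A 0 0 := by have := hA; simp [Matrix.trace_fin_two] at this; linear_combination this
  have hb : B 1 1 = -B 0 0 := by have := hB; simp [Matrix.trace_fin_two] at this; linear_combination this
  ext i j
  fin_cases i <;> fin_cases j <;>
    simp [Matrix.mul_apply, Fin.sum_univ_two, Matrix.trace_fin_two, ha, hb] <;> ring

lemma keyB (A B : Matrix (Fin 2) (Fin 2) ℂ) (hA : A.trace = 0) (hB : B.trace = 0) :
    (A*B-B*A)*B - B*(A*B-B*A) = (2*(B*B).trace) • A - (2*(A*B).trace) • B := by
  have ha : A 1 1 = -A 0 0 := by have := hA; simp [Matrix.trace_fin_two] at this; linear_combination this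
  have hb : B 1 1 = -B 0 0 := by have := hB; simp [Matrix.trace_fin_two] at this; linear_combination this
  ext i j
  fin_cases i <;> fin_cases j <;>
    simp [Matrix.mul_apply, Fin.sum_univ_two, Matrix.trace_fin_two, ha, hb] <;> ring
attribute [local instance] Matrix.linftyOpNormedRing Matrix.linftyOpNormedAlgebra
  Matrix.linftyOpNormedSpace

noncomputable abbrev traceCLM : Matrix (Fin 2) (Fin 2) ℂ →L[ℝ] ℂ :=
  LinearMap.toContinuousLinearMap
    ((Matrix.traceLinearMap (Fin 2) ℂ ℂ).restrictScalars ℝ)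

lemma entry_deriv (X : ℝ → Matrix (Fin 2) (Fin 2) ℂ) (D : Matrix (Fin 2) (Fin 2) ℂ) (t : ℝ)
    (h : ∀ i j, HasDerivAt (fun s => X s i j) (D i j) t) :
    HasDerivAt X D t := by
  have h2 : HasDerivAt (fun s => ∑ i : Fin 2, ∑ j : Fin 2, X s i j • single i j (1:ℂ))
      (∑ i : Fin 2, ∑ j : Fin 2, D i j • single i j (1:ℂ)) t := by
    refine HasDerivAt.fun_sum fun i _ => HasDerivAt.fun_sum fun j _ => ?_
    exact HasDerivAt.smul_const (h i j) (single i j (1:ℂ))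
  have e1 : ∀ M : Matrix (Fin 2) (Fin 2) ℂ,
      ∑ i : Fin 2, ∑ j : Fin 2, M i j • single i j (1:ℂ) = M := by
    intro M
    conv_rhs => rw [matrix_eq_sum_single M]
    refine Finset.sum_congr rfl fun i _ => Finset.sum_congr rfl fun j _ => ?_
    rw [smul_single, smul_eq_mul, mul_one]
  simpa only [e1] using h2

lemma inv_deriv (X : ℝ → Matrix (Fin 2) (Fin 2) ℂ) (D : Matrix (Fin 2) (Fin 2) ℂ) (t : ℝ)
    (hu : IsUnit (X t)) (h : HasDerivAt X D t) :
    HasDerivAt (fun s => (X s)⁻¹) (-((X t)⁻¹ * D * (X t)⁻¹)) t := by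
  obtain ⟨u, hu⟩ := hu
  have hinv : (X t)⁻¹ = Ring.inverse (X t) := nonsing_inv_eq_ringInverse _
  have h1 : HasDerivAt (fun s => Ring.inverse (X s))
      ((-ContinuousLinearMap.mulLeftRight ℝ (Matrix (Fin 2) (Fin 2) ℂ) ↑u⁻¹ ↑u⁻¹) D) t := by
    have h0 := (hasFDerivAt_ringInverse (𝕜 := ℝ) u)
    rw [hu] at h0
    exact h0.comp_hasDerivAt t h
  have hc : (↑u⁻¹ : Matrix (Fin 2) (Fin 2) ℂ) = (X t)⁻¹ := by
    rw [hinv, ← hu, Ring.inverse_unit]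
  simp only [ContinuousLinearMap.neg_apply, ContinuousLinearMap.mulLeftRight_apply, hc] at h1
  have heq : (fun s => Ring.inverse (X s)) = fun s => (X s)⁻¹ := by
    funext s; rw [nonsing_inv_eq_ringInverse]
  rw [heq] at h1
  convert h1 using 1
  try noncomm_ring

lemma uM_deriv (T M L : Matrix (Fin 2) (Fin 2) ℂ) (X : ℝ → Matrix (Fin 2) (Fin 2) ℂ) (t : ℝ)
    (hu : IsUnit (X t)) (hXd : HasDerivAt X (L * X t) t) :
    HasDerivAt (fun s => -2 * (T * (X s)⁻¹ * M * X s).trace)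
      (-2 * (T * (X t)⁻¹ * (M * L - L * M) * X t).trace) t := by
  set Y := (X t)⁻¹ with hY
  have hXY : X t * Y = 1 := mul_nonsing_inv _ ((isUnit_iff_isUnit_det _).mp hu)
  have hYd : HasDerivAt (fun s => (X s)⁻¹) (-(Y * (L * X t) * Y)) t :=
    inv_deriv X (L * X t) t hu hXd
  have h1 : HasDerivAt (fun s => T * (X s)⁻¹ * M * X s)
      (T * (-(Y * (L * X t) * Y)) * M * X t + T * Y * M * (L * X t)) t :=
    (((hYd.const_mul T).mul_const M).mul hXd)
  have key : T * (-(Y * (L * X t) * Y)) * M * X t + T * Y * M * (L * X t)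
      = T * Y * (M * L - L * M) * X t := by
    have h2 : Y * (L * X t) * Y = Y * L := by
      rw [← mul_assoc, mul_assoc (Y * L), hXY, mul_one]
    rw [h2]; noncomm_ring
  rw [key] at h1
  have h3 := (traceCLM.hasFDerivAt.comp_hasDerivAt t h1).const_mul (-2 : ℂ)
  exact h3

theorem stmt7 (A B T : Matrix (Fin 2) (Fin 2) ℂ) (hA : su11 A) (hB : su11 B) (hT : su11 T)
    (X : ℝ → Matrix (Fin 2) (Fin 2) ℂ) (hinv : ∀ t, IsUnit (X t))
    -- closed-loop dynamics: X′(t) = (A + u_B(t)·B)·X(t) with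
    -- u_B(t) = −2·Tr(T·X(t)⁻¹·B·X(t))
    (hX : ∀ t i j, HasDerivAt (fun s => X s i j)
      (((A + (-2 * (T * (X t)⁻¹ * B * X t).trace) • B) * X t) i j) t) :
    ∀ t,
      -- u_A′(t) = u_B(t)·u_C(t)
      HasDerivAt (fun s => -2 * (T * (X s)⁻¹ * A * X s).trace)
        ((-2 * (T * (X t)⁻¹ * B * X t).trace) *
          (-2 * (T * (X t)⁻¹ * (A * B - B * A) * X t).trace)) t ∧
      -- u_B′(t) = −u_C(t)
      HasDerivAt (fun s => -2 * (T * (X s)⁻¹ * B * X s).trace)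
        (-(-2 * (T * (X t)⁻¹ * (A * B - B * A) * X t).trace)) t ∧
      -- u_C′(t) = α·u_A(t) − β·u_B(t) + γ·u_A(t)·u_B(t) − α·u_B(t)²
      HasDerivAt (fun s => -2 * (T * (X s)⁻¹ * (A * B - B * A) * X s).trace)
        ((2 * (A * B).trace) * (-2 * (T * (X t)⁻¹ * A * X t).trace)
          - (2 * (A * A).trace) * (-2 * (T * (X t)⁻¹ * B * X t).trace)
          + (2 * (B * B).trace) * (-2 * (T * (X t)⁻¹ * A * X t).trace) *
              (-2 * (T * (X t)⁻¹ * B * X t).trace)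
          - (2 * (A * B).trace) * (-2 * (T * (X t)⁻¹ * B * X t).trace) ^ 2) t := by
  intro t
  set u : ℂ := -2 * (T * (X t)⁻¹ * B * X t).trace with hu
  set L : Matrix (Fin 2) (Fin 2) ℂ := A + u • B with hL
  have hXd : HasDerivAt X (L * X t) t := entry_deriv X (L * X t) t (fun i j => hX t i j)
  have hC := keyA A B hA.1 hB.1
  have hD := keyB A B hA.1 hB.1
  refine ⟨?_, ?_, ?_⟩
  · have h := uM_deriv T A L X t (hinv t) hXd
    convert h using 1
    have e : A * L - L * A = u • (A * B - B * A) := by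
      rw [hL]; simp [mul_add, add_mul, mul_smul_comm, smul_mul_assoc, smul_sub]; try abel
    rw [e]
    simp [mul_smul_comm, smul_mul_assoc, trace_smul, smul_eq_mul]
    try ring
  · have h := uM_deriv T B L X t (hinv t) hXd
    convert h using 1
    have e : B * L - L * B = -(A * B - B * A) := by
      rw [hL]; simp [mul_add, add_mul, mul_smul_comm, smul_mul_assoc]; try abel
    rw [e]
    simp only [mul_neg, neg_mul, trace_neg]
    try ring
  · have h := uM_deriv T (A * B - B * A) L X t (hinv t) hXd
    convert h using 1
    have e : (A * B - B * A) * L - L * (A * B - B * A)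
        = (2 * (A * B).trace) • A - (2 * (A * A).trace) • B
          + u • ((2 * (B * B).trace) • A - (2 * (A * B).trace) • B) := by
      have e0 : (A * B - B * A) * L - L * (A * B - B * A)
          = ((A * B - B * A) * A - A * (A * B - B * A))
            + u • ((A * B - B * A) * B - B * (A * B - B * A)) := by
        rw [hL]; simp [mul_add, add_mul, mul_smul_comm, smul_mul_assoc, smul_sub]; try abel
      rw [e0, hC, hD]
    rw [e]
    simp [mul_add, add_mul, mul_sub, sub_mul, mul_smul_comm, smul_mul_assoc, smul_sub, smul_smul,
      trace_add, trace_sub, trace_smul, smul_eq_mul]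
    try ring
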